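/- Fix $n_0 \in \mathbb{Z}_+$. The function $h_3(p) = 1 - e^{-n_0 D[(3p-1)/(3-p), p]}$ is continuous and strictly decreasing on $(1/3, 1)$, with $\lim_{p \to 1/3^+} h_3(p) = 1 - (2/3)^{n_0}$ and $\lim_{p \to 1^-} h_3(p) = 0$. -/

import Mathlib

/-- Bernoulli Kullback-Leibler divergence. -/
noncomputable def KL (x y : ℝ) : ℝ :=
  x * Real.log (x / y) + (1 - x) * Real.log ((1 - x) / (1 - y))

open Real Filter Set

noncomputable def phi (p : ℝ) : ℝ :=
  (3*p-1)/(3-p) * (Real.log (3*p-1) - Real.log p - Real.log (3-p))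
  + (4*(1-p)/(3-p)) * (Real.log 4 - Real.log (3-p))

lemma phi_eq {p : ℝ} (hp : p ∈ Set.Ioo (1/3 : ℝ) 1) :
    KL ((3 * p - 1) / (3 - p)) p = phi p := by
  obtain ⟨h1, h2⟩ := hp
  have h3 : (0:ℝ) < 3*p-1 := by linarith
  have h4 : (0:ℝ) < 3-p := by linarith
  have h5 : (0:ℝ) < p := by linarith
  have h6 : (0:ℝ) < 1-p := by linarith
  unfold KL phi
  have e1 : (3*p-1)/(3-p)/p = (3*p-1)/(p*(3-p)) := by
    rw [div_div, mul_comm (3-p) p]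
  have e2 : (1 - (3*p-1)/(3-p)) = 4*(1-p)/(3-p) := by
    field_simp; ring
  rw [e1, e2]
  have e3 : 4*(1-p)/(3-p)/(1-p) = 4/(3-p) := by
    rw [div_div, mul_comm (3-p) (1-p), mul_comm 4 (1-p), mul_div_mul_left _ _ h6.ne']
  rw [e3]
  rw [Real.log_div h3.ne' (by positivity), Real.log_mul h5.ne' h4.ne',
    Real.log_div (by norm_num) h4.ne']
  ring

lemma log_lt_pade {t : ℝ} (ht0 : 0 < t) (ht1 : t < 1) :
    Real.log t < 2*(t-1)/(t+1) := by
  have key : StrictAntiOn (fun t : ℝ => 2*(t-1)/(t+1) - Real.log t) (Set.Ioc 0 1) := by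
    apply strictAntiOn_of_deriv_neg (convex_Ioc 0 1)
    · apply ContinuousOn.sub
      · apply ContinuousOn.div (by fun_prop) (by fun_prop)
        intro x hx
        have := hx.1
        positivity
      · exact fun x hx => (Real.continuousAt_log (ne_of_gt hx.1)).continuousWithinAt
    · intro x hx
      rw [interior_Ioc] at hx
      obtain ⟨hx0, hx1⟩ := hx
      have h1 : x + 1 ≠ 0 := by positivity
      have hd : HasDerivAt (fun t : ℝ => 2*(t-1)/(t+1) - Real.log t)
          ((2*1*(x+1) - 2*(x-1)*1)/(x+1)^2 - x⁻¹) x := by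
        exact ((((hasDerivAt_id x).sub_const 1).const_mul 2).div
          ((hasDerivAt_id x).add_const 1) h1).sub (Real.hasDerivAt_log (ne_of_gt hx0))
      rw [hd.deriv]
      rw [sub_neg, inv_eq_one_div, div_lt_div_iff₀ (by positivity) hx0]
      nlinarith [sq_nonneg (x-1)]
  have h := key (Set.mem_Ioc.2 ⟨ht0, ht1.le⟩) (Set.mem_Ioc.2 ⟨one_pos, le_refl 1⟩) ht1
  simp only [Real.log_one] at h
  have : (2*((1:ℝ)-1)/(1+1) - 0) = 0 := by norm_num
  linarith [h]

lemma phi_hasDerivAt {p : ℝ} (hp : p ∈ Set.Ioo (1/3 : ℝ) 1) :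
    HasDerivAt phi (8/(3-p)^2 * Real.log ((3*p-1)/(4*p)) + (p+1)/(p*(3-p))) p := by
  obtain ⟨h1, h2⟩ := hp
  have h3 : (0:ℝ) < 3*p-1 := by linarith
  have h4 : (0:ℝ) < 3-p := by linarith
  have h5 : (0:ℝ) < p := by linarith
  have hnum : HasDerivAt (fun p : ℝ => 3*p-1) 3 p := by
    simpa using ((hasDerivAt_id p).const_mul 3).sub_const 1
  have hden : HasDerivAt (fun p : ℝ => 3-p) (-1) p := by
    simpa using (hasDerivAt_id' p).const_sub (3:ℝ)
  have hA : HasDerivAt (fun p : ℝ => (3*p-1)/(3-p)) ((3*(3-p) - (3*p-1)*(-1))/(3-p)^2) p :=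
    hnum.div hden h4.ne'
  have hB : HasDerivAt (fun p : ℝ => Real.log (3*p-1) - Real.log p - Real.log (3-p))
      (3/(3*p-1) - p⁻¹ - (-1)/(3-p)) p := by
    exact ((hnum.log h3.ne').sub (Real.hasDerivAt_log h5.ne')).sub (hden.log h4.ne')
  have hCnum : HasDerivAt (fun p : ℝ => 4*(1-p)) (-4) p := by
    have : HasDerivAt (fun p : ℝ => 1-p) (-1) p := by
      simpa using (hasDerivAt_id' p).const_sub (1:ℝ)
    simpa using this.const_mul 4
  have hC : HasDerivAt (fun p : ℝ => 4*(1-p)/(3-p)) (((-4)*(3-p) - 4*(1-p)*(-1))/(3-p)^2) p :=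
    hCnum.div hden h4.ne'
  have hD : HasDerivAt (fun p : ℝ => Real.log 4 - Real.log (3-p)) (-((-1)/(3-p))) p := by
    simpa using (hden.log h4.ne').const_sub (Real.log 4)
  have hphi := (hA.mul hB).add (hC.mul hD)
  have : phi = fun p : ℝ => (3*p-1)/(3-p) * (Real.log (3*p-1) - Real.log p - Real.log (3-p))
      + (4*(1-p)/(3-p)) * (Real.log 4 - Real.log (3-p)) := rfl
  rw [this]
  convert hphi using 1
  · rfl
  · rfl
  · rfl
  rw [Real.log_div h3.ne' (by positivity), Real.log_mul (by norm_num) h5.ne']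
  field_simp
  ring

lemma mainDeriv_neg {p : ℝ} (hp : p ∈ Set.Ioo (1/3 : ℝ) 1) :
    8/(3-p)^2 * Real.log ((3*p-1)/(4*p)) + (p+1)/(p*(3-p)) < 0 := by
  obtain ⟨h1, h2⟩ := hp
  have h3 : (0:ℝ) < 3*p-1 := by linarith
  have h4 : (0:ℝ) < 3-p := by linarith
  have h5 : (0:ℝ) < p := by linarith
  have h7 : (0:ℝ) < 7*p-1 := by linarith
  set t : ℝ := (3*p-1)/(4*p) with ht
  have ht0 : 0 < t := by positivity
  have ht1 : t < 1 := by rw [ht, div_lt_one (by positivity)]; linarith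
  have hlog := log_lt_pade ht0 ht1
  have hcoef : (0:ℝ) < 8/(3-p)^2 := by positivity
  have hmul : 8/(3-p)^2 * Real.log t < 8/(3-p)^2 * (2*(t-1)/(t+1)) :=
    mul_lt_mul_of_pos_left hlog hcoef
  have e : 2*(t-1)/(t+1) = -2*(p+1)/(7*p-1) := by
    rw [ht]
    rw [div_eq_div_iff (by positivity) h7.ne']
    field_simp
    ring
  rw [e] at hmul
  have final : 8/(3-p)^2 * (-2*(p+1)/(7*p-1)) + (p+1)/(p*(3-p)) < 0 := by
    have key : 8/(3-p)^2 * (-2*(p+1)/(7*p-1)) + (p+1)/(p*(3-p))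
        = ((p+1)*(-7*p^2+6*p-3))/(p*(3-p)^2*(7*p-1)) := by
      rw [div_mul_div_comm, div_add_div _ _ (mul_pos (pow_pos h4 2) h7).ne' (mul_pos h5 h4).ne',
        div_eq_div_iff (mul_pos (mul_pos (pow_pos h4 2) h7) (mul_pos h5 h4)).ne'
          (mul_pos (mul_pos h5 (pow_pos h4 2)) h7).ne']
      ring
    rw [key]
    apply div_neg_of_neg_of_pos
    · nlinarith [sq_nonneg (p - 3/7)]
    · positivity
  linarith


/-- `h₃(p) = 1 - e^{-n₀ D[(3p-1)/(3-p), p]}` is continuous and strictly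
decreasing on `(1/3, 1)`, tends to `1 - (2/3)^{n₀}` as `p → 1/3⁺` and to `0` as `p → 1⁻`. -/
theorem stmt_14 (n₀ : ℕ) (hn₀ : 1 ≤ n₀) :
    ContinuousOn (fun p : ℝ => 1 - Real.exp (-(n₀ : ℝ) * KL ((3 * p - 1) / (3 - p)) p))
      (Set.Ioo (1/3 : ℝ) 1) ∧
    StrictAntiOn (fun p : ℝ => 1 - Real.exp (-(n₀ : ℝ) * KL ((3 * p - 1) / (3 - p)) p))
      (Set.Ioo (1/3 : ℝ) 1) ∧
    Filter.Tendsto (fun p : ℝ => 1 - Real.exp (-(n₀ : ℝ) * KL ((3 * p - 1) / (3 - p)) p))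
      (nhdsWithin (1/3) (Set.Ioi (1/3))) (nhds (1 - (2/3 : ℝ) ^ n₀)) ∧
    Filter.Tendsto (fun p : ℝ => 1 - Real.exp (-(n₀ : ℝ) * KL ((3 * p - 1) / (3 - p)) p))
      (nhdsWithin 1 (Set.Iio 1)) (nhds 0) := by
  set f := fun p : ℝ => 1 - Real.exp (-(n₀ : ℝ) * KL ((3 * p - 1) / (3 - p)) p) with hf
  set g := fun p : ℝ => 1 - Real.exp (-(n₀ : ℝ) * phi p) with hg
  have heq : ∀ p ∈ Set.Ioo (1/3 : ℝ) 1, f p = g p := by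
    intro p hp
    simp only [hf, hg, phi_eq hp]
  -- continuity
  have hphic : ContinuousOn phi (Set.Ioo (1/3 : ℝ) 1) := fun p hp =>
    ((phi_hasDerivAt hp).continuousAt).continuousWithinAt
  have hgc : ContinuousOn g (Set.Ioo (1/3 : ℝ) 1) :=
    continuousOn_const.sub (Real.continuous_exp.comp_continuousOn
      (continuousOn_const.mul hphic))
  have hcont : ContinuousOn f (Set.Ioo (1/3 : ℝ) 1) := hgc.congr heq
  -- derivative of f on the interior
  have hderiv : ∀ p ∈ Set.Ioo (1/3 : ℝ) 1, HasDerivAt f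
      (-(Real.exp (-(n₀:ℝ) * phi p) * (-(n₀:ℝ) *
        (8/(3-p)^2 * Real.log ((3*p-1)/(4*p)) + (p+1)/(p*(3-p)))))) p := by
    intro p hp
    have hmem : Set.Ioo (1/3 : ℝ) 1 ∈ nhds p := isOpen_Ioo.mem_nhds hp
    have hev : f =ᶠ[nhds p] g := Filter.eventuallyEq_of_mem hmem (fun q hq => heq q hq)
    have hd2 : HasDerivAt g (-(Real.exp (-(n₀:ℝ) * phi p) * (-(n₀:ℝ) *
        (8/(3-p)^2 * Real.log ((3*p-1)/(4*p)) + (p+1)/(p*(3-p)))))) p :=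
      HasDerivAt.const_sub 1 (((phi_hasDerivAt hp).const_mul (-(n₀:ℝ))).exp)
    exact hd2.congr_of_eventuallyEq hev
  have hanti : StrictAntiOn f (Set.Ioo (1/3 : ℝ) 1) := by
    apply strictAntiOn_of_deriv_neg (convex_Ioo _ _) hcont
    intro p hp
    rw [interior_Ioo] at hp
    rw [(hderiv p hp).deriv]
    have hD := mainDeriv_neg hp
    have hexp : 0 < Real.exp (-(n₀:ℝ) * phi p) := Real.exp_pos _
    have hn : (0:ℝ) < (n₀:ℝ) := by exact_mod_cast hn₀
    have : -(Real.exp (-(n₀:ℝ) * phi p) * (-(n₀:ℝ) *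
        (8/(3-p)^2 * Real.log ((3*p-1)/(4*p)) + (p+1)/(p*(3-p)))))
      = Real.exp (-(n₀:ℝ) * phi p) * ((n₀:ℝ) *
        (8/(3-p)^2 * Real.log ((3*p-1)/(4*p)) + (p+1)/(p*(3-p)))) := by ring
    rw [this]
    exact mul_neg_of_pos_of_neg hexp (mul_neg_of_pos_of_neg hn hD)
  -- limit at 1⁻
  have hphic1 : ContinuousAt phi 1 := by
    have c1 : ContinuousAt (fun p : ℝ => (3*p-1)/(3-p)) 1 :=
      ContinuousAt.div (by fun_prop) (by fun_prop) (by norm_num)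
    have c2 : ContinuousAt (fun p : ℝ => Real.log (3*p-1) - Real.log p - Real.log (3-p)) 1 :=
      ((ContinuousAt.log (by fun_prop) (by norm_num)).sub
        (ContinuousAt.log (by fun_prop) (by norm_num))).sub
        (ContinuousAt.log (by fun_prop) (by norm_num))
    have c3 : ContinuousAt (fun p : ℝ => 4*(1-p)/(3-p)) 1 :=
      ContinuousAt.div (by fun_prop) (by fun_prop) (by norm_num)
    have c4 : ContinuousAt (fun p : ℝ => Real.log 4 - Real.log (3-p)) 1 :=
      continuousAt_const.sub (ContinuousAt.log (by fun_prop) (by norm_num))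
    exact (c1.mul c2).add (c3.mul c4)
  have hphi1v : phi 1 = 0 := by unfold phi; norm_num
  have hlim1 : Filter.Tendsto f (nhdsWithin 1 (Set.Iio 1)) (nhds 0) := by
    have hgc1 : ContinuousAt g 1 :=
      continuousAt_const.sub (Real.continuous_exp.continuousAt.comp
        (continuousAt_const.mul hphic1))
    have hval : g 1 = 0 := by simp [hg, hphi1v]
    have hTg : Filter.Tendsto g (nhdsWithin 1 (Set.Iio 1)) (nhds 0) := by
      rw [← hval]
      exact (hgc1.continuousWithinAt).tendsto
    refine hTg.congr' ?_
    exact Filter.eventuallyEq_of_mem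
      (Ioo_mem_nhdsLT_of_mem (by norm_num : (1:ℝ) ∈ Set.Ioc (1/3 : ℝ) 1))
      (fun q hq => (heq q hq).symm)
  -- limit at (1/3)⁺
  have hphilim : Filter.Tendsto phi (nhdsWithin (1/3) (Set.Ioi (1/3)))
      (nhds (Real.log (3/2))) := by
    have hdecomp : phi = fun p : ℝ =>
        ((3*p-1) * Real.log (3*p-1)) * (1/(3-p))
        + ((3*p-1)/(3-p)) * (-(Real.log p) - Real.log (3-p))
        + (4*(1-p)/(3-p)) * (Real.log 4 - Real.log (3-p)) := by
      funext p; unfold phi; ring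
    rw [hdecomp]
    have base : Filter.Tendsto (fun x : ℝ => Real.log x * x) (nhdsWithin 0 (Set.Ioi 0))
        (nhds 0) := by
      have := tendsto_log_mul_rpow_nhdsGT_zero (one_pos)
      simpa [Real.rpow_one] using this
    have cmap : Filter.Tendsto (fun p : ℝ => 3*p-1) (nhdsWithin (1/3) (Set.Ioi (1/3)))
        (nhdsWithin 0 (Set.Ioi 0)) := by
      apply tendsto_nhdsWithin_of_tendsto_nhds_of_eventually_within
      · have hca : ContinuousAt (fun p : ℝ => 3*p-1) (1/3) := by fun_prop
        have h := hca.tendsto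
        norm_num at h
        exact h.mono_left nhdsWithin_le_nhds
      · filter_upwards [eventually_mem_nhdsWithin] with p hp
        simp only [Set.mem_Ioi] at hp ⊢
        linarith
    have T1 : Filter.Tendsto (fun p : ℝ => (3*p-1) * Real.log (3*p-1))
        (nhdsWithin (1/3) (Set.Ioi (1/3))) (nhds 0) := by
      have := base.comp cmap
      simpa [Function.comp_def, mul_comm] using this
    have T1' : Filter.Tendsto (fun p : ℝ => 1/(3-p)) (nhdsWithin (1/3) (Set.Ioi (1/3)))
        (nhds (1/(3-1/3))) := by
      apply Filter.Tendsto.mono_left _ nhdsWithin_le_nhds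
      exact (ContinuousAt.div continuousAt_const (by fun_prop) (by norm_num)).tendsto
    have T2a : Filter.Tendsto (fun p : ℝ => (3*p-1)/(3-p)) (nhdsWithin (1/3) (Set.Ioi (1/3)))
        (nhds 0) := by
      apply Filter.Tendsto.mono_left _ nhdsWithin_le_nhds
      have : ContinuousAt (fun p : ℝ => (3*p-1)/(3-p)) (1/3) :=
        ContinuousAt.div (by fun_prop) (by fun_prop) (by norm_num)
      have h0 : (3*(1/3:ℝ)-1)/(3-1/3) = 0 := by norm_num
      simpa [h0] using this.tendsto
    have T2b : Filter.Tendsto (fun p : ℝ => -(Real.log p) - Real.log (3-p))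
        (nhdsWithin (1/3) (Set.Ioi (1/3)))
        (nhds (-(Real.log (1/3)) - Real.log (3-1/3))) := by
      apply Filter.Tendsto.mono_left _ nhdsWithin_le_nhds
      exact (((ContinuousAt.log (by fun_prop) (by norm_num)).neg).sub
        (ContinuousAt.log (by fun_prop) (by norm_num))).tendsto
    have T3 : Filter.Tendsto (fun p : ℝ => (4*(1-p)/(3-p)) * (Real.log 4 - Real.log (3-p)))
        (nhdsWithin (1/3) (Set.Ioi (1/3)))
        (nhds ((4*(1-1/3)/(3-1/3)) * (Real.log 4 - Real.log (3-1/3)))) := by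
      apply Filter.Tendsto.mono_left _ nhdsWithin_le_nhds
      exact ((ContinuousAt.div (by fun_prop) (by fun_prop) (by norm_num)).mul
        (continuousAt_const.sub (ContinuousAt.log (by fun_prop) (by norm_num)))).tendsto
    have total := ((T1.mul T1').add (T2a.mul T2b)).add T3
    have hvals : (0 * (1/(3-1/3:ℝ)) + 0 * (-(Real.log (1/3)) - Real.log (3-1/3)))
        + ((4*(1-1/3)/(3-1/3)) * (Real.log 4 - Real.log (3-1/3)))
        = Real.log (3/2) := by
      have : (3 - 1/3 : ℝ) = 8/3 := by norm_num
      rw [this]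
      rw [← Real.log_div (by norm_num) (by norm_num)]
      norm_num
    rwa [hvals] at total
  have hlim2 : Filter.Tendsto f (nhdsWithin (1/3) (Set.Ioi (1/3)))
      (nhds (1 - (2/3 : ℝ) ^ n₀)) := by
    have hcomp : Filter.Tendsto g (nhdsWithin (1/3) (Set.Ioi (1/3)))
        (nhds (1 - Real.exp (-(n₀:ℝ) * Real.log (3/2)))) := by
      have hc : ContinuousAt (fun y : ℝ => 1 - Real.exp (-(n₀:ℝ) * y)) (Real.log (3/2)) := by
        fun_prop
      exact (hc.tendsto).comp hphilim
    have hval : Real.exp (-(n₀:ℝ) * Real.log (3/2)) = (2/3 : ℝ) ^ n₀ := by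
      have h1 : -(n₀:ℝ) * Real.log (3/2) = (n₀:ℝ) * Real.log (2/3) := by
        rw [show (2/3 : ℝ) = (3/2 : ℝ)⁻¹ by norm_num, Real.log_inv]
        ring
      rw [h1, ← Real.log_pow, Real.exp_log (by positivity)]
    rw [hval] at hcomp
    refine hcomp.congr' ?_
    exact Filter.eventuallyEq_of_mem
      (Ioo_mem_nhdsGT_of_mem (by norm_num : (1/3:ℝ) ∈ Set.Ico (1/3 : ℝ) 1))
      (fun q hq => (heq q hq).symm)
  exact ⟨hcont, hanti, hlim2, hlim1⟩
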